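/- Let k ≥ 2, n = 3k+1, and let I = I(P_n) be the edge ideal of the path P_n in S = K[x_1,…,x_n] over a field K. Let P = {a ∈ N^n : x^a ∉ I and x^a divides x_1x_2⋯x_n} be the characteristic poset of S/I, let α = Σ_{i=1}^{k−2} e_{3i−1} ∈ N^n, and let P_{k+2,α} = {a ∈ P : |a| = k+2 and x^α divides x^a}. Then P_{k+2,α} = {α + e_{3k−5} + e_{3k−3} + e_{3k−1} + e_{3k+1}}; moreover A = Σ_{i=1}^{k−1} e_{3i−1} belongs to P and |A| = k−1. -/
import Mathlib


open MvPolynomial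

/-- The edge ideal `I(P_m)` of the path `P_m` on vertices `x_1, …, x_m`
(0-indexed as `X 0, …, X (m-1)`), regarded as an ideal of `S = K[x_1, …, x_n]`:
it is generated by the monomials `X i * X (i+1)` for `i + 2 ≤ m`
(1-indexed: `x_i x_{i+1}` for `1 ≤ i ≤ m - 1`). -/
noncomputable def pathIdeal (K : Type*) [Field K] (n m : ℕ) :
    Ideal (MvPolynomial (Fin n) K) :=
  Ideal.span {p | ∃ i j : Fin n, (j : ℕ) = (i : ℕ) + 1 ∧ (i : ℕ) + 2 ≤ m ∧ p = X i * X j}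

lemma prod_X_univ {K : Type*} [Field K] {σ : Type*} [Fintype σ] [DecidableEq σ] :
    (∏ i : σ, (X i : MvPolynomial σ K)) =
      monomial (∑ i : σ, Finsupp.single i 1) (1 : K) := by
  classical
  induction (Finset.univ : Finset σ) using Finset.induction with
  | empty => simp
  | insert h ih => simp_all [X, monomial_mul]

lemma monomial_mem_pathIdeal_iff {K : Type*} [Field K] {n m : ℕ} (a : Fin n →₀ ℕ) :
    (monomial a (1 : K)) ∈ pathIdeal K n m ↔
      ∃ i j : Fin n, (j : ℕ) = (i : ℕ) + 1 ∧ (i : ℕ) + 2 ≤ m ∧ 1 ≤ a i ∧ 1 ≤ a j := by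
  classical
  have hset : {p : MvPolynomial (Fin n) K |
      ∃ i j : Fin n, (j : ℕ) = (i : ℕ) + 1 ∧ (i : ℕ) + 2 ≤ m ∧ p = X i * X j} =
      (fun s => monomial s (1 : K)) ''
        {s | ∃ i j : Fin n, (j : ℕ) = (i : ℕ) + 1 ∧ (i : ℕ) + 2 ≤ m ∧
          s = Finsupp.single i 1 + Finsupp.single j 1} := by
    ext p
    constructor
    · rintro ⟨i, j, h1, h2, rfl⟩
      exact ⟨Finsupp.single i 1 + Finsupp.single j 1, ⟨i, j, h1, h2, rfl⟩,
        by simp [X, monomial_mul]⟩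
    · rintro ⟨s, ⟨i, j, h1, h2, rfl⟩, rfl⟩
      exact ⟨i, j, h1, h2, by simp [X, monomial_mul]⟩
  rw [pathIdeal, hset, mem_ideal_span_monomial_image]
  simp only [support_monomial, if_neg (one_ne_zero : (1:K) ≠ 0), Finset.mem_singleton,
    forall_eq]
  constructor
  · rintro ⟨s, ⟨i, j, h1, h2, rfl⟩, hle⟩
    have hij : i ≠ j := by simp [Fin.ext_iff]; omega
    refine ⟨i, j, h1, h2, ?_, ?_⟩
    · have := hle i; simpa [Finsupp.single_apply, Ne.symm hij] using this
    · have := hle j; simpa [Finsupp.single_apply, hij] using this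
  · rintro ⟨i, j, h1, h2, hi, hj⟩
    refine ⟨_, ⟨i, j, h1, h2, rfl⟩, ?_⟩
    intro t
    have hij : i ≠ j := by simp [Fin.ext_iff]; omega
    rcases eq_or_ne t i with rfl | hti
    · simp [Finsupp.single_apply, hij.symm, hi]
    rcases eq_or_ne t j with rfl | htj
    · simp [Finsupp.single_apply, hij, hj]
    · simp [Finsupp.single_apply, Ne.symm hti, Ne.symm htj]

lemma sum_single_apply' {n m : ℕ} (hm : ∀ i : ℕ, i < m → 3*i+1 < n) (j : Fin n) :
    (∑ i : Fin m, Finsupp.single (⟨3*(i:ℕ)+1, hm i i.isLt⟩ : Fin n) 1) j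
      = if (j:ℕ) % 3 = 1 ∧ (j:ℕ) < 3*m then 1 else 0 := by
  classical
  rw [Finsupp.finset_sum_apply]
  simp only [Finsupp.single_apply, Fin.ext_iff]
  split_ifs with h0
  · rw [Finset.sum_eq_single (⟨((j:ℕ)-1)/3, by omega⟩ : Fin m)]
    · rw [if_pos]; simp; omega
    · intro i _ hne
      rw [if_neg]
      have hne' : (i:ℕ) ≠ ((j:ℕ)-1)/3 := by simpa [Fin.ext_iff] using hne
      omega
    · simp
  · refine Finset.sum_eq_zero fun i _ => ?_
    rw [if_neg]
    have := i.isLt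
    omega

lemma count_mod3 (m : ℕ) :
    ∑ j ∈ Finset.range (3*m), (if j % 3 = 1 then (1:ℕ) else 0) = m := by
  induction m with
  | zero => simp
  | succ m ih =>
    have h3 : 3*(m+1) = 3*m+1+1+1 := by ring
    rw [h3, Finset.sum_range_succ, Finset.sum_range_succ, Finset.sum_range_succ, ih]
    split_ifs <;> omega

lemma count_aux {m M : ℕ} (h : 3*m ≤ M) :
    ∑ j ∈ Finset.range M, (if j % 3 = 1 ∧ j < 3*m then (1:ℕ) else 0) = m := by
  rw [← Finset.sum_subset (Finset.range_subset_range.2 h)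
      (fun x hx hnx => by
        simp only [Finset.mem_range] at hx hnx
        rw [if_neg]; omega)]
  rw [Finset.sum_congr rfl (fun j hj => by
    simp only [Finset.mem_range] at hj
    show _ = if j % 3 = 1 then (1:ℕ) else 0
    split_ifs <;> omega)]
  exact count_mod3 m

lemma sum_single_one_apply {n : ℕ} (j : Fin n) :
    (∑ i : Fin n, Finsupp.single i (1:ℕ)) j = 1 := by
  classical
  rw [Finsupp.finset_sum_apply]
  simp [Finsupp.single_apply]

lemma monomial_dvd_prod_iff {K : Type*} [Field K] {n : ℕ} (a : Fin n →₀ ℕ) :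
    (monomial a (1:K)) ∣ ∏ i : Fin n, X i ↔ ∀ j, a j ≤ 1 := by
  rw [prod_X_univ, monomial_dvd_monomial]
  constructor
  · rintro ⟨h | h, -⟩ j
    · exact absurd h one_ne_zero
    · have := (Finsupp.le_def.mp h) j
      simpa [sum_single_one_apply] using this
  · intro h
    refine ⟨Or.inr (Finsupp.le_def.mpr fun j => ?_), dvd_refl _⟩
    rw [sum_single_one_apply]; exact h j

lemma monomial_dvd_monomial_one {K : Type*} [Field K] {n : ℕ} (a b : Fin n →₀ ℕ) :
    (monomial a (1:K)) ∣ monomial b 1 ↔ ∀ j, a j ≤ b j := by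
  rw [monomial_dvd_monomial]
  simp [Finsupp.le_def, (one_ne_zero : (1:K) ≠ 0)]

set_option linter.all false in
set_option maxHeartbeats 1000000 in
/-- Let `k ≥ 2`, `n = 3k + 1` and `I = I(P_n)` in `S = K[x_1, …, x_n]`. In the
characteristic poset `P = {a ∈ ℕⁿ : x ^ a ∉ I and x ^ a ∣ x_1 ⋯ x_n}` of `S/I`,
with `α = Σ_{i=1}^{k-2} e_{3i-1}` (written 0-indexed below), one has
`P_{k+2, α} = {α + e_{3k-5} + e_{3k-3} + e_{3k-1} + e_{3k+1}}`; moreover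
`A = Σ_{i=1}^{k-1} e_{3i-1}` belongs to `P` and `|A| = k - 1`. -/
theorem charPoset_path_three_mul_add_one {K : Type*} [Field K] (k n : ℕ) (hk : 2 ≤ k)
    (hn : n = 3 * k + 1) :
    ({a : Fin n →₀ ℕ |
        ((monomial a (1 : K)) ∉ pathIdeal K n n ∧ (monomial a (1 : K)) ∣ ∏ i : Fin n, X i) ∧
        (∑ j : Fin n, a j) = k + 2 ∧
        (monomial (∑ i : Fin (k - 2), Finsupp.single (⟨3 * (i : ℕ) + 1, by omega⟩ : Fin n) 1)
          (1 : K)) ∣ (monomial a (1 : K))} =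
      {(∑ i : Fin (k - 2), Finsupp.single (⟨3 * (i : ℕ) + 1, by omega⟩ : Fin n) 1) +
        Finsupp.single (⟨3 * k - 6, by omega⟩ : Fin n) 1 +
        Finsupp.single (⟨3 * k - 4, by omega⟩ : Fin n) 1 +
        Finsupp.single (⟨3 * k - 2, by omega⟩ : Fin n) 1 +
        Finsupp.single (⟨3 * k, by omega⟩ : Fin n) 1}) ∧
    ((monomial (∑ i : Fin (k - 1), Finsupp.single (⟨3 * (i : ℕ) + 1, by omega⟩ : Fin n) 1)
        (1 : K)) ∉ pathIdeal K n n ∧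
      (monomial (∑ i : Fin (k - 1), Finsupp.single (⟨3 * (i : ℕ) + 1, by omega⟩ : Fin n) 1)
        (1 : K)) ∣ ∏ i : Fin n, X i) ∧
    (∑ j : Fin n, (∑ i : Fin (k - 1), Finsupp.single (⟨3 * (i : ℕ) + 1, by omega⟩ : Fin n) 1) j)
      = k - 1 := by
  classical
  subst hn
  have hm2 : ∀ i : ℕ, i < k - 2 → 3*i+1 < 3*k+1 := fun i h => by omega
  have hm1 : ∀ i : ℕ, i < k - 1 → 3*i+1 < 3*k+1 := fun i h => by omega
  -- pointwise value of the target
  have htv : ∀ j : Fin (3*k+1),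
      (((∑ i : Fin (k - 2), Finsupp.single (⟨3 * (i : ℕ) + 1, hm2 i i.isLt⟩ : Fin (3*k+1)) 1) +
        Finsupp.single (⟨3 * k - 6, by omega⟩ : Fin (3*k+1)) 1 +
        Finsupp.single (⟨3 * k - 4, by omega⟩ : Fin (3*k+1)) 1 +
        Finsupp.single (⟨3 * k - 2, by omega⟩ : Fin (3*k+1)) 1 +
        Finsupp.single (⟨3 * k, by omega⟩ : Fin (3*k+1)) 1 : Fin (3*k+1) →₀ ℕ)) j =
      (if (j:ℕ) % 3 = 1 ∧ (j:ℕ) < 3*(k-2) then 1 else 0) +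
      (if 3*k-6 = (j:ℕ) then 1 else 0) + (if 3*k-4 = (j:ℕ) then 1 else 0) +
      (if 3*k-2 = (j:ℕ) then 1 else 0) + (if 3*k = (j:ℕ) then 1 else 0) := by
    intro j
    simp only [Finsupp.add_apply, Finsupp.single_apply, Fin.ext_iff]
    rw [sum_single_apply' hm2]
  refine ⟨?_, ⟨?_, ?_⟩, ?_⟩
  · -- the set equality
    ext a
    simp only [Set.mem_setOf_eq, Set.mem_singleton_iff]
    constructor
    · rintro ⟨⟨hnotmem, hdvd⟩, hsum, hαdvd⟩
      have hle1 : ∀ j, a j ≤ 1 := (monomial_dvd_prod_iff a).1 hdvd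
      obtain ⟨b, hb⟩ : ∃ b : ℕ → ℕ, ∀ t (h : t < 3*k+1), b t = a ⟨t, h⟩ :=
        ⟨fun t => if h : t < 3*k+1 then a ⟨t, h⟩ else 0, fun t h => dif_pos h⟩
      have haj : ∀ j : Fin (3*k+1), a j = b (j:ℕ) := fun j => (hb (j:ℕ) j.isLt).symm
      have hble : ∀ t : ℕ, (h : t < 3*k+1) → b t ≤ 1 := fun t h => by
        rw [hb t h]; exact hle1 _
      have hbadj : ∀ t : ℕ, t + 1 < 3*k+1 → ¬(1 ≤ b t ∧ 1 ≤ b (t+1)) := by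
        rintro t ht ⟨h1, h2⟩
        rw [hb t (by omega)] at h1
        rw [hb (t+1) ht] at h2
        refine hnotmem ((monomial_mem_pathIdeal_iff a).2
          ⟨⟨t, by omega⟩, ⟨t+1, ht⟩, rfl, ?_, h1, h2⟩)
        simp only [Fin.val_mk]
        omega
      have hαle : ∀ t : ℕ, t % 3 = 1 → t < 3*(k-2) → 1 ≤ b t := by
        intro t h1 h2
        have ht : t < 3*k+1 := by omega
        have h3 := (monomial_dvd_monomial_one _ a).1 hαdvd ⟨t, ht⟩
        rw [sum_single_apply' hm2] at h3
        rw [hb t ht]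
        refine le_trans ?_ h3
        rw [if_pos]
        exact ⟨h1, h2⟩
      have hbv1 : ∀ t : ℕ, t % 3 = 1 → t < 3*(k-2) → b t = 1 := fun t h1 h2 =>
        le_antisymm (hble t (by omega)) (hαle t h1 h2)
      have hbv0 : ∀ t : ℕ, t % 3 ≠ 1 → t < 3*(k-2) → b t = 0 := by
        intro t h1 h2
        by_contra hne
        have hmod : t % 3 = 0 ∨ t % 3 = 1 ∨ t % 3 = 2 := by omega
        rcases hmod with h0 | h0 | h0
        · have hv : b (t+1) = 1 := hbv1 (t+1) (by omega) (by omega)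
          exact hbadj t (by omega) ⟨by omega, by omega⟩
        · exact h1 h0
        · have hv : b (t-1) = 1 := hbv1 (t-1) (by omega) (by omega)
          have := hbadj (t-1) (by omega)
          rw [show t-1+1 = t by omega] at this
          exact this ⟨by omega, by omega⟩
      -- total sum in terms of b
      have hs2 : ∑ t ∈ Finset.range (3*k+1), b t = k + 2 := by
        rw [← Fin.sum_univ_eq_sum_range b (3*k+1), ← hsum]
        exact Finset.sum_congr rfl fun j _ => (haj j).symm
      have hhead : ∑ t ∈ Finset.range (3*(k-2)), b t = k - 2 := by
        rw [Finset.sum_congr rfl (fun t ht => by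
          simp only [Finset.mem_range] at ht
          show b t = if t % 3 = 1 then (1:ℕ) else 0
          by_cases h1 : t % 3 = 1
          · rw [if_pos h1]; exact hbv1 t h1 ht
          · rw [if_neg h1]; exact hbv0 t h1 ht)]
        exact count_mod3 (k-2)
      rw [show 3*k+1 = 3*(k-2)+1+1+1+1+1+1+1 by omega] at hs2
      rw [Finset.sum_range_succ, Finset.sum_range_succ, Finset.sum_range_succ,
        Finset.sum_range_succ, Finset.sum_range_succ, Finset.sum_range_succ,
        Finset.sum_range_succ, hhead] at hs2
      rw [show 3*(k-2) = 3*k-6 by omega] at hs2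
      rw [show 3*k-6+1 = 3*k-5 by omega] at hs2
      rw [show 3*k-6+2 = 3*k-4 by omega] at hs2
      rw [show 3*k-6+3 = 3*k-3 by omega] at hs2
      rw [show 3*k-6+4 = 3*k-2 by omega] at hs2
      rw [show 3*k-6+5 = 3*k-1 by omega] at hs2
      rw [show 3*k-6+6 = 3*k by omega] at hs2
      have a0 : ¬(1 ≤ b (3*k-6) ∧ 1 ≤ b (3*k-5)) := by
        rw [show 3*k-5 = 3*k-6+1 by omega]; exact hbadj _ (by omega)
      have a1 : ¬(1 ≤ b (3*k-5) ∧ 1 ≤ b (3*k-4)) := by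
        rw [show 3*k-4 = 3*k-5+1 by omega]; exact hbadj _ (by omega)
      have a2 : ¬(1 ≤ b (3*k-4) ∧ 1 ≤ b (3*k-3)) := by
        rw [show 3*k-3 = 3*k-4+1 by omega]; exact hbadj _ (by omega)
      have a3 : ¬(1 ≤ b (3*k-3) ∧ 1 ≤ b (3*k-2)) := by
        rw [show 3*k-2 = 3*k-3+1 by omega]; exact hbadj _ (by omega)
      have a4 : ¬(1 ≤ b (3*k-2) ∧ 1 ≤ b (3*k-1)) := by
        rw [show 3*k-1 = 3*k-2+1 by omega]; exact hbadj _ (by omega)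
      have a5 : ¬(1 ≤ b (3*k-1) ∧ 1 ≤ b (3*k)) := by
        rw [show 3*k = 3*k-1+1 by omega]; exact hbadj _ (by omega)
      have l0 := hble (3*k-6) (by omega)
      have l1 := hble (3*k-5) (by omega)
      have l2 := hble (3*k-4) (by omega)
      have l3 := hble (3*k-3) (by omega)
      have l4 := hble (3*k-2) (by omega)
      have l5 := hble (3*k-1) (by omega)
      have l6 := hble (3*k) (by omega)
      have hvals : b (3*k-6) = 1 ∧ b (3*k-5) = 0 ∧ b (3*k-4) = 1 ∧ b (3*k-3) = 0 ∧
          b (3*k-2) = 1 ∧ b (3*k-1) = 0 ∧ b (3*k) = 1 := by omega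
      obtain ⟨v0, v1, v2, v3, v4, v5, v6⟩ := hvals
      ext j
      rw [htv j, haj j]
      rcases lt_or_ge (j:ℕ) (3*(k-2)) with hj | hj
      · by_cases h1 : (j:ℕ) % 3 = 1
        · rw [hbv1 _ h1 hj]; split_ifs <;> omega
        · rw [hbv0 _ h1 hj]; split_ifs <;> omega
      · have hjlt := j.isLt
        have : (j:ℕ) = 3*k-6 ∨ (j:ℕ) = 3*k-5 ∨ (j:ℕ) = 3*k-4 ∨ (j:ℕ) = 3*k-3 ∨
            (j:ℕ) = 3*k-2 ∨ (j:ℕ) = 3*k-1 ∨ (j:ℕ) = 3*k := by omega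
        rcases this with h | h | h | h | h | h | h
        · rw [h, v0]; split_ifs <;> omega
        · rw [h, v1]; split_ifs <;> omega
        · rw [h, v2]; split_ifs <;> omega
        · rw [h, v3]; split_ifs <;> omega
        · rw [h, v4]; split_ifs <;> omega
        · rw [h, v5]; split_ifs <;> omega
        · rw [h, v6]; split_ifs <;> omega
    · rintro rfl
      have hcond : ∀ j : Fin (3*k+1),
          1 ≤ (((∑ i : Fin (k - 2),
              Finsupp.single (⟨3 * (i : ℕ) + 1, hm2 i i.isLt⟩ : Fin (3*k+1)) 1) +
            Finsupp.single (⟨3 * k - 6, by omega⟩ : Fin (3*k+1)) 1 +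
            Finsupp.single (⟨3 * k - 4, by omega⟩ : Fin (3*k+1)) 1 +
            Finsupp.single (⟨3 * k - 2, by omega⟩ : Fin (3*k+1)) 1 +
            Finsupp.single (⟨3 * k, by omega⟩ : Fin (3*k+1)) 1 : Fin (3*k+1) →₀ ℕ)) j →
          ((j:ℕ) % 3 = 1 ∧ (j:ℕ) < 3*(k-2)) ∨ (j:ℕ) = 3*k-6 ∨ (j:ℕ) = 3*k-4 ∨
            (j:ℕ) = 3*k-2 ∨ (j:ℕ) = 3*k := by
        intro j h
        rw [htv j] at h
        by_contra hc
        rw [if_neg (fun h1 => hc (Or.inl h1)),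
          if_neg (fun h2 => hc (Or.inr (Or.inl h2.symm))),
          if_neg (fun h3 => hc (Or.inr (Or.inr (Or.inl h3.symm)))),
          if_neg (fun h4 => hc (Or.inr (Or.inr (Or.inr (Or.inl h4.symm))))),
          if_neg (fun h5 => hc (Or.inr (Or.inr (Or.inr (Or.inr h5.symm)))))] at h
        omega
      refine ⟨⟨?_, ?_⟩, ?_, ?_⟩
      · rw [monomial_mem_pathIdeal_iff]
        rintro ⟨i, j, hij, h2, hi, hj⟩
        have ci := hcond i hi
        have cj := hcond j hj
        omega
      · refine (monomial_dvd_prod_iff _).2 fun j => ?_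
        rw [htv j]
        split_ifs <;> omega
      · calc ∑ j : Fin (3*k+1), _ =
            ∑ j : Fin (3*k+1), (fun t : ℕ =>
              (if t % 3 = 1 ∧ t < 3*(k-2) then 1 else 0) +
              (if 3*k-6 = t then 1 else 0) + (if 3*k-4 = t then 1 else 0) +
              (if 3*k-2 = t then 1 else 0) + (if 3*k = t then 1 else 0)) (j:ℕ) :=
              Finset.sum_congr rfl fun j _ => htv j
          _ = ∑ t ∈ Finset.range (3*k+1),
              ((if t % 3 = 1 ∧ t < 3*(k-2) then 1 else 0) +
              (if 3*k-6 = t then 1 else 0) + (if 3*k-4 = t then 1 else 0) +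
              (if 3*k-2 = t then 1 else 0) + (if 3*k = t then 1 else 0)) :=
              Fin.sum_univ_eq_sum_range (fun t : ℕ =>
              ((((if t % 3 = 1 ∧ t < 3*(k-2) then 1 else 0) +
              (if 3*k-6 = t then 1 else 0)) + (if 3*k-4 = t then 1 else 0)) +
              (if 3*k-2 = t then 1 else 0)) + (if 3*k = t then 1 else 0)) (3*k+1)
          _ = k + 2 := by
              simp only [Finset.sum_add_distrib, count_aux (by omega : 3*(k-2) ≤ 3*k+1),
                Finset.sum_ite_eq, Finset.mem_range]
              rw [if_pos (by omega), if_pos (by omega), if_pos (by omega), if_pos (by omega)]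
              omega
      · refine (monomial_dvd_monomial_one _ _).2 fun j => ?_
        rw [htv j, sum_single_apply' hm2]
        split_ifs <;> omega
  · rw [monomial_mem_pathIdeal_iff]
    rintro ⟨i, j, hij, h2, hi, hj⟩
    rw [sum_single_apply' hm1] at hi hj
    split_ifs at hi hj <;> omega
  · refine (monomial_dvd_prod_iff _).2 fun j => ?_
    rw [sum_single_apply' hm1]
    split_ifs <;> omega
  · calc ∑ j : Fin (3*k+1), _ =
        ∑ j : Fin (3*k+1), (fun t : ℕ => if t % 3 = 1 ∧ t < 3*(k-1) then 1 else 0) (j:ℕ) :=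
          Finset.sum_congr rfl fun j _ => by rw [sum_single_apply' hm1]
      _ = ∑ t ∈ Finset.range (3*k+1), (if t % 3 = 1 ∧ t < 3*(k-1) then 1 else 0) :=
          Fin.sum_univ_eq_sum_range
            (fun t : ℕ => if t % 3 = 1 ∧ t < 3*(k-1) then 1 else 0) (3*k+1)
      _ = k - 1 := count_aux (by omega)
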